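/- Let $V$ be a finite-dimensional real vector space, $\Theta \in \Lambda^n V^*$, $\Omega \in \Lambda^{n+1} V^*$ (playing the role of $d\Theta$) with $\ker_1\Theta \cap \ker_1\Omega = \{0\}$ and $\ker_1\Omega \neq \{0\}$. If $X \in V$ and $\gamma \in \mathbb{R}$ satisfy $\iota_X\Theta = 0$ and $\iota_X\Omega = \gamma\,\Theta$, then $\gamma = 0$ and $X = 0$. -/

import Mathlib

lemma cons_swap {V : Type*} (X Y : V) (n : ℕ) (m : Fin n → V) :
    Fin.cons Y (Fin.cons X m) =
      (Fin.cons X (Fin.cons Y m) : Fin (n + 2) → V) ∘ Equiv.swap 0 1 := by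
  have h1 : (1 : Fin (n + 2)) = Fin.succ 0 := rfl
  funext i
  refine Fin.cases ?_ (fun j => ?_) i
  · simp only [Function.comp_apply, Equiv.swap_apply_left, Fin.cons_zero, h1, Fin.cons_succ]
  · refine Fin.cases ?_ (fun k => ?_) j
    · simp only [Function.comp_apply, h1, Equiv.swap_apply_right, Fin.cons_succ, Fin.cons_zero]
    · have ha : (Fin.succ (Fin.succ k) : Fin (n+2)) ≠ 0 := Fin.succ_ne_zero _
      have hb : (Fin.succ (Fin.succ k) : Fin (n+2)) ≠ 1 := by
        rw [h1]; exact fun h => Fin.succ_ne_zero _ (Fin.succ_injective _ h)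
      simp only [Function.comp_apply, Equiv.swap_apply_of_ne_of_ne ha hb, Fin.cons_succ]

/-!
STATEMENT 5 (Lemma 4.1, pointwise).

`Θ` an `n`-form (degree `n+1` here), `Ω` an `(n+1)`-form (degree `n+2`, playing
the role of `dΘ`), with `ker₁ Θ ∩ ker₁ Ω = {0}` and `ker₁ Ω ≠ {0}`.  If
`ι_X Θ = 0` and `ι_X Ω = γ·Θ`, then `γ = 0` and `X = 0`.
-/
theorem stmt5
    (V : Type*) [AddCommGroup V] [Module ℝ V] [FiniteDimensional ℝ V] (n : ℕ)
    (Θ : V [⋀^Fin (n + 1)]→ₗ[ℝ] ℝ) (Ω : V [⋀^Fin (n + 2)]→ₗ[ℝ] ℝ)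
    (hker : ∀ v : V, Θ.curryLeft v = 0 → Ω.curryLeft v = 0 → v = 0)
    (hne : ∃ v : V, v ≠ 0 ∧ Ω.curryLeft v = 0)
    (X : V) (γ : ℝ)
    (hXΘ : Θ.curryLeft X = 0)
    (hXΩ : Ω.curryLeft X = γ • Θ) :
    γ = 0 ∧ X = 0 := by
  obtain ⟨Y, hY0, hYΩ⟩ := hne
  have hYΘ : Θ.curryLeft Y ≠ 0 := fun h => hY0 (hker Y h hYΩ)
  have h01 : (0 : Fin (n + 2)) ≠ 1 := Fin.zero_ne_one
  have hγ : γ = 0 := by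
    have key : ∀ m : Fin n → V, γ * Θ (Fin.cons Y m) = 0 := by
      intro m
      have h1 : Ω (Fin.cons X (Fin.cons Y m)) = γ * Θ (Fin.cons Y m) := by
        have := DFunLike.congr_fun hXΩ (Fin.cons Y m)
        simpa [Matrix.vecCons] using this
      have h2 : Ω (Fin.cons Y (Fin.cons X m)) = - Ω (Fin.cons X (Fin.cons Y m)) := by
        rw [cons_swap]; exact Ω.map_swap _ h01
      have h3 : Ω (Fin.cons Y (Fin.cons X m)) = 0 := by
        have := DFunLike.congr_fun hYΩ (Fin.cons X m)
        simpa [Matrix.vecCons] using this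
      rw [h3] at h2
      rw [← h1, ← neg_eq_zero, ← h2]
    by_contra hγ
    apply hYΘ
    ext m
    simpa [Matrix.vecCons] using (mul_eq_zero.mp (key m)).resolve_left hγ
  exact ⟨hγ, hker X hXΘ (by rw [hXΩ, hγ, zero_smul])⟩
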